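/- Let Φ denote the standard normal CDF and φ the standard normal density. For every x ∈ ℝ, the function h(t) = Φ(t·x/√(2−t²)) is twice differentiable on (−√2, √2) with second derivative h''(t) = −(2·t·x/(2−t²)^{7/2}) · (2x² − 3(2−t²)) · φ(t·x/√(2−t²)). -/

import Mathlib

open MeasureTheory Filter Set

/-- The standard normal density. -/
noncomputable def stdPdf (t : ℝ) : ℝ := Real.exp (-(t ^ 2) / 2) / Real.sqrt (2 * Real.pi)

/-- The standard normal cumulative distribution function. -/
noncomputable def stdCdf (x : ℝ) : ℝ := ∫ t in Set.Iic x, stdPdf t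

lemma stdPdf_integrable : Integrable stdPdf := by
  have h : Integrable (fun t : ℝ => Real.exp (-(1/2 : ℝ) * t ^ 2)) :=
    integrable_exp_neg_mul_sq (by norm_num)
  have h2 := h.div_const (Real.sqrt (2 * Real.pi))
  convert h2 using 2 with s
  unfold stdPdf; ring_nf

lemma stdPdf_continuous : Continuous stdPdf := by
  unfold stdPdf
  fun_prop

lemma hasDerivAt_stdCdf (y : ℝ) : HasDerivAt stdCdf (stdPdf y) y := by
  have hfun : stdCdf = fun u => stdCdf 0 + ∫ s in (0:ℝ)..u, stdPdf s := by
    funext u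
    rw [← intervalIntegral.integral_Iic_sub_Iic stdPdf_integrable.integrableOn
      stdPdf_integrable.integrableOn]
    unfold stdCdf; ring
  rw [hfun]
  exact (intervalIntegral.integral_hasDerivAt_right
    stdPdf_integrable.intervalIntegrable
    (stdPdf_continuous.stronglyMeasurable.stronglyMeasurableAtFilter)
    stdPdf_continuous.continuousAt).const_add _

lemma hasDerivAt_stdPdf (y : ℝ) : HasDerivAt stdPdf (-y * stdPdf y) y := by
  have h1 : HasDerivAt (fun s : ℝ => -(s ^ 2) / 2) (-y) y := by
    have := ((hasDerivAt_pow 2 y).neg).div_const 2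
    simpa using this.congr_deriv (by ring)
  have h2 := (Real.hasDerivAt_exp (-(y ^ 2) / 2)).comp y h1
  have h3 := h2.div_const (Real.sqrt (2 * Real.pi))
  refine HasDerivAt.congr_deriv (f := stdPdf) h3 ?_
  unfold stdPdf; ring

lemma rpow_half_nat (c : ℝ) (hc : 0 ≤ c) (n : ℕ) :
    c ^ ((n : ℝ)/2) = (Real.sqrt c) ^ n := by
  rw [Real.sqrt_eq_rpow, ← Real.rpow_natCast (c ^ ((1:ℝ)/2)) n, ← Real.rpow_mul hc]
  ring_nf

/-- The second-derivative formula from the proof of Lemma 1: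
`h(t) = Φ(t·x/√(2-t²))` is twice differentiable on `(-√2, √2)` with
`h''(t) = -(2tx/(2-t²)^{7/2})(2x² - 3(2-t²)) φ(t·x/√(2-t²))`. -/
theorem stmt7 (x t : ℝ) (ht : t ∈ Set.Ioo (-Real.sqrt 2) (Real.sqrt 2)) :
    DifferentiableAt ℝ (fun s : ℝ => stdCdf (s * x / Real.sqrt (2 - s ^ 2))) t ∧
    HasDerivAt (deriv (fun s : ℝ => stdCdf (s * x / Real.sqrt (2 - s ^ 2))))
      (-(2 * t * x / (2 - t ^ 2) ^ ((7:ℝ)/2)) * (2 * x ^ 2 - 3 * (2 - t ^ 2)) *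
        stdPdf (t * x / Real.sqrt (2 - t ^ 2))) t := by
  have hsq : ∀ s ∈ Set.Ioo (-Real.sqrt 2) (Real.sqrt 2), 0 < 2 - s ^ 2 := by
    intro s hs
    have h2 : s ^ 2 < (Real.sqrt 2) ^ 2 := sq_lt_sq' hs.1 hs.2
    rw [Real.sq_sqrt (by norm_num : (2:ℝ) ≥ 0)] at h2
    linarith
  set g : ℝ → ℝ := fun s => s * x / Real.sqrt (2 - s ^ 2) with hg_def
  set F : ℝ → ℝ := fun s => 2 * x / (2 - s ^ 2) ^ ((3:ℝ)/2) * stdPdf (g s) with hF_def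
  -- derivative of g
  have hg : ∀ s ∈ Set.Ioo (-Real.sqrt 2) (Real.sqrt 2),
      HasDerivAt g (2 * x / (2 - s ^ 2) ^ ((3:ℝ)/2)) s := by
    intro s hs
    have hc := hsq s hs
    have hr : Real.sqrt (2 - s ^ 2) ^ 2 = 2 - s ^ 2 := Real.sq_sqrt hc.le
    have hr0 : Real.sqrt (2 - s ^ 2) ≠ 0 := by positivity
    have hin : HasDerivAt (fun u : ℝ => 2 - u ^ 2) (-(2 * s)) s := by
      have := (hasDerivAt_pow 2 s).const_sub 2
      simpa using this.congr_deriv (by ring)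
    have hsqrt := hin.sqrt (by positivity)
    have hnum : HasDerivAt (fun u : ℝ => u * x) x s := by
      simpa using (hasDerivAt_id s).mul_const x
    have hdiv := hnum.div hsqrt hr0
    refine hdiv.congr_deriv ?_
    have h32 : (2 - s ^ 2) ^ ((3:ℝ)/2) = Real.sqrt (2 - s ^ 2) ^ 3 := by
      rw [show ((3:ℝ)/2) = ((3:ℕ):ℝ)/2 by norm_num]; exact rpow_half_nat _ hc.le 3
    rw [h32]
    field_simp
    linear_combination x * hr
  have hA : ∀ s ∈ Set.Ioo (-Real.sqrt 2) (Real.sqrt 2),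
      HasDerivAt (fun u : ℝ => stdCdf (g u)) (F s) s := by
    intro s hs
    have := (hasDerivAt_stdCdf (g s)).comp s (hg s hs)
    exact this.congr_deriv (by ring)
  have hmem : Set.Ioo (-Real.sqrt 2) (Real.sqrt 2) ∈ nhds t := isOpen_Ioo.mem_nhds ht
  have hB : deriv (fun s : ℝ => stdCdf (g s)) =ᶠ[nhds t] F := by
    filter_upwards [hmem] with s hs
    exact (hA s hs).deriv
  refine ⟨(hA t ht).differentiableAt, ?_⟩
  have hc := hsq t ht
  have hr : Real.sqrt (2 - t ^ 2) ^ 2 = 2 - t ^ 2 := Real.sq_sqrt hc.le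
  have hr0 : Real.sqrt (2 - t ^ 2) ≠ 0 := by positivity
  -- derivative of F at t
  have hin : HasDerivAt (fun u : ℝ => 2 - u ^ 2) (-(2 * t)) t := by
    have := (hasDerivAt_pow 2 t).const_sub 2
    simpa using this.congr_deriv (by ring)
  have hpow : HasDerivAt (fun u : ℝ => (2 - u ^ 2) ^ ((3:ℝ)/2))
      (((3:ℝ)/2) * (2 - t ^ 2) ^ ((3:ℝ)/2 - 1) * (-(2 * t))) t :=
    by have := (Real.hasDerivAt_rpow_const (x := 2 - t ^ 2) (p := (3:ℝ)/2) (Or.inl hc.ne')).comp t hin; exact this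
  have hu : HasDerivAt (fun u : ℝ => 2 * x / (2 - u ^ 2) ^ ((3:ℝ)/2))
      ((0 * (2 - t ^ 2) ^ ((3:ℝ)/2) - 2 * x * (((3:ℝ)/2) * (2 - t ^ 2) ^ ((3:ℝ)/2 - 1) * (-(2 * t)))) /
        ((2 - t ^ 2) ^ ((3:ℝ)/2)) ^ 2) t :=
    (hasDerivAt_const t (2 * x)).div hpow (by positivity)
  have hphi : HasDerivAt (fun u : ℝ => stdPdf (g u))
      (-(g t) * stdPdf (g t) * (2 * x / (2 - t ^ 2) ^ ((3:ℝ)/2))) t :=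
    (hasDerivAt_stdPdf (g t)).comp t (hg t ht)
  have hF : HasDerivAt F
      (-(2 * t * x / (2 - t ^ 2) ^ ((7:ℝ)/2)) * (2 * x ^ 2 - 3 * (2 - t ^ 2)) *
        stdPdf (t * x / Real.sqrt (2 - t ^ 2))) t := by
    refine (hu.mul hphi).congr_deriv ?_
    have h32 : (2 - t ^ 2) ^ ((3:ℝ)/2) = Real.sqrt (2 - t ^ 2) ^ 3 := by
      rw [show ((3:ℝ)/2) = ((3:ℕ):ℝ)/2 by norm_num]; exact rpow_half_nat _ hc.le 3
    have h72 : (2 - t ^ 2) ^ ((7:ℝ)/2) = Real.sqrt (2 - t ^ 2) ^ 7 := by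
      rw [show ((7:ℝ)/2) = ((7:ℕ):ℝ)/2 by norm_num]; exact rpow_half_nat _ hc.le 7
    have h12 : (2 - t ^ 2) ^ ((3:ℝ)/2 - 1) = Real.sqrt (2 - t ^ 2) := by
      rw [show ((3:ℝ)/2 - 1) = ((1:ℕ):ℝ)/2 by norm_num, rpow_half_nat _ hc.le 1, pow_one]
    rw [hg_def]
    simp only []
    rw [h32, h72, h12]
    field_simp
    linear_combination (6*t*x*stdPdf (t * x / Real.sqrt (2 - t^2))) * hr
  exact hF.congr_of_eventuallyEq hB
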